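/- Let λ′ ∈ [0, 1/2), μ₂ ∈ ℝ, and let μ₁′ ≠ μ₂′ be real numbers. If λ′ sin((μ₂−μ₁′)t) + (1−λ′) sin((μ₂−μ₂′)t) = 0 for all t ∈ ℝ, then λ′ = 0 and μ₂ = μ₂′. -/

import Mathlib

/-- Degenerate case (mixing proportion `λ = 0`) of the trigonometric identity used to
prove identifiability of the two-component shifted symmetric mixture model. -/
theorem stmt_4 (lam' mu₂ mu₁' mu₂' : ℝ)
    (hlam' : lam' ∈ Set.Ico (0 : ℝ) (1 / 2)) (hmu' : mu₁' ≠ mu₂')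
    (h : ∀ t : ℝ,
      lam' * Real.sin ((mu₂ - mu₁') * t) + (1 - lam') * Real.sin ((mu₂ - mu₂') * t) = 0) :
    lam' = 0 ∧ mu₂ = mu₂' := by
  obtain ⟨h0, h2⟩ := hlam'
  have hb : mu₂ = mu₂' := by
    by_contra hb
    have hbne : mu₂ - mu₂' ≠ 0 := sub_ne_zero.mpr hb
    have ht := h (Real.pi / (2 * (mu₂ - mu₂')))
    have hx : (mu₂ - mu₂') * (Real.pi / (2 * (mu₂ - mu₂'))) = Real.pi / 2 := by
      field_simp
    rw [hx, Real.sin_pi_div_two] at ht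
    have hs := Real.neg_one_le_sin ((mu₂ - mu₁') * (Real.pi / (2 * (mu₂ - mu₂'))))
    nlinarith [Real.sin_le_one ((mu₂ - mu₁') * (Real.pi / (2 * (mu₂ - mu₂'))))]
  refine ⟨?_, hb⟩
  have hane : mu₂ - mu₁' ≠ 0 := by
    rw [hb]; exact sub_ne_zero.mpr (Ne.symm hmu')
  have ht := h (Real.pi / (2 * (mu₂ - mu₁')))
  have hx : (mu₂ - mu₁') * (Real.pi / (2 * (mu₂ - mu₁'))) = Real.pi / 2 := by
    field_simp
  rw [hx, Real.sin_pi_div_two, hb, sub_self, zero_mul, Real.sin_zero] at ht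
  linarith
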